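/- Let d ≥ 4 and let 𝕊_{d,3} be the space of symmetric real d×d matrices with zero diagonal and all row sums zero. If T : 𝕊_{d,3} → 𝕊_{d,3} is a linear map satisfying T(P_σ W P_σᵀ) = P_σ T(W) P_σᵀ for all σ ∈ S_d and all W ∈ 𝕊_{d,3}, then T is a scalar multiple of the identity. -/

import Mathlib

open Matrix

/-- The permutation matrix of `σ`. -/
def permMat {d : ℕ} (σ : Equiv.Perm (Fin d)) : Matrix (Fin d) (Fin d) ℝ :=
  Matrix.of fun i j => if σ j = i then (1 : ℝ) else 0

/-- `𝕊_{d,3}`: symmetric matrices with zero diagonal and all row sums zero. -/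
def Sd3 (d : ℕ) : Submodule ℝ (Matrix (Fin d) (Fin d) ℝ) where
  carrier := {A | Aᵀ = A ∧ (∀ i, A i i = 0) ∧ ∀ i, ∑ j, A i j = 0}
  zero_mem' := ⟨by simp, fun i => rfl, by simp⟩
  add_mem' := by
    rintro a b ⟨ha1, ha2, ha3⟩ ⟨hb1, hb2, hb3⟩
    refine ⟨by rw [Matrix.transpose_add, ha1, hb1], fun i => ?_, fun i => ?_⟩
    · simp [Matrix.add_apply, ha2 i, hb2 i]
    · simp [Matrix.add_apply, Finset.sum_add_distrib, ha3 i, hb3 i]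
  smul_mem' := by
    rintro c a ⟨ha1, ha2, ha3⟩
    refine ⟨by rw [Matrix.transpose_smul, ha1], fun i => ?_, fun i => ?_⟩
    · simp [Matrix.smul_apply, ha2 i]
    · simp [Matrix.smul_apply, ← Finset.mul_sum, ha3 i]

namespace Sd3Aux

variable {d : ℕ}

abbrev M (d : ℕ) := Matrix (Fin d) (Fin d) ℝ

lemma act_apply (σ : Equiv.Perm (Fin d)) (A : M d) (i j : Fin d) :
    (permMat σ * A * (permMat σ)ᵀ) i j = A (σ.symm i) (σ.symm j) := by
  have h1 : ∀ l : Fin d, (permMat σ * A) i l = A (σ.symm i) l := by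
    intro l
    simp only [Matrix.mul_apply, permMat, Matrix.of_apply]
    rw [Finset.sum_eq_single (σ.symm i)]
    · simp
    · intro b _ hb
      rw [if_neg, zero_mul]
      intro h
      exact hb (by rw [← h, Equiv.symm_apply_apply])
    · intro h; exact absurd (Finset.mem_univ _) h
  simp only [Matrix.mul_apply, Matrix.transpose_apply, permMat, Matrix.of_apply]
  rw [Finset.sum_eq_single (σ.symm j)]
  · have := h1 (σ.symm j)
    simp only [Matrix.mul_apply, permMat, Matrix.of_apply] at this
    rw [Equiv.apply_symm_apply, if_pos rfl, mul_one, this]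
  · intro b _ hb
    rw [if_neg, mul_zero]
    intro h
    exact hb (by rw [← h, Equiv.symm_apply_apply])
  · intro h; exact absurd (Finset.mem_univ _) h

lemma act_mem (σ : Equiv.Perm (Fin d)) {A : M d} (hA : A ∈ Sd3 d) :
    permMat σ * A * (permMat σ)ᵀ ∈ Sd3 d := by
  obtain ⟨h1, h2, h3⟩ := hA
  refine ⟨?_, fun i => ?_, fun i => ?_⟩
  · ext i j
    rw [Matrix.transpose_apply, act_apply, act_apply]
    exact congrFun (congrFun h1 (σ.symm i)) (σ.symm j)
  · rw [act_apply]; exact h2 _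
  · simp only [act_apply]
    exact (Equiv.sum_comp σ.symm (fun j => A (σ.symm i) j)).trans (h3 _)

noncomputable def ssym (A : M d) : M d :=
  Matrix.of fun i j => if i = j then 0 else (A i j + A j i) / 2

noncomputable def rr (A : M d) (i : Fin d) : ℝ := ∑ j, ssym A i j

noncomputable def tt (A : M d) : ℝ := ∑ i, rr A i

noncomputable def pim (d : ℕ) (A : M d) : M d :=
  Matrix.of fun i j => if i = j then 0 else
    ssym A i j - (rr A i + rr A j) / ((d : ℝ) - 2)
      + tt A / (((d : ℝ) - 1) * ((d : ℝ) - 2))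

lemma ssym_symm (A : M d) (i j : Fin d) : ssym A j i = ssym A i j := by
  simp only [ssym, Matrix.of_apply]
  rcases eq_or_ne i j with h | h
  · subst h; rfl
  · rw [if_neg h, if_neg (Ne.symm h)]; ring

lemma ssym_diag (A : M d) (i : Fin d) : ssym A i i = 0 := by simp [ssym]

lemma sum_ite_zero (i : Fin d) (g : Fin d → ℝ) :
    ∑ j, (if i = j then 0 else g j) = (∑ j, g j) - g i := by
  have h : ∀ j, (if i = j then (0:ℝ) else g j) = g j - (if i = j then g j else 0) := by
    intro j; split_ifs with h
    · subst h; ring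
    · ring
  simp_rw [h, Finset.sum_sub_distrib, Finset.sum_ite_eq, Finset.mem_univ, if_pos]

lemma pim_mem (hd : 4 ≤ d) (A : M d) : pim d A ∈ Sd3 d := by
  have hdr : (4 : ℝ) ≤ (d : ℝ) := by exact_mod_cast hd
  have hd2 : ((d : ℝ) - 2) ≠ 0 := by linarith
  have hd1 : ((d : ℝ) - 1) ≠ 0 := by linarith
  refine ⟨?_, fun i => ?_, fun i => ?_⟩
  · ext i j
    simp only [pim, Matrix.transpose_apply, Matrix.of_apply]
    rcases eq_or_ne i j with h | h
    · subst h; rfl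
    · rw [if_neg (Ne.symm h), if_neg h, ssym_symm]; ring
  · simp [pim]
  · simp only [pim, Matrix.of_apply]
    rw [sum_ite_zero i]
    have e1 : ∀ j : Fin d, ssym A i j - (rr A i + rr A j) / ((d : ℝ) - 2)
        + tt A / (((d : ℝ) - 1) * ((d : ℝ) - 2))
        = ssym A i j - rr A i / ((d : ℝ) - 2) - rr A j / ((d : ℝ) - 2)
        + tt A / (((d : ℝ) - 1) * ((d : ℝ) - 2)) := fun j => by ring
    simp_rw [e1, Finset.sum_add_distrib, Finset.sum_sub_distrib, Finset.sum_const,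
      Finset.card_univ, Fintype.card_fin]
    have e2 : ∑ j, ssym A i j = rr A i := rfl
    have e3 : ∑ j : Fin d, rr A j / ((d : ℝ) - 2) = tt A / ((d : ℝ) - 2) := by
      rw [← Finset.sum_div]; rfl
    rw [e2, e3, ssym_diag]
    simp only [nsmul_eq_mul]
    field_simp
    ring

lemma pim_eq_self {A : M d} (hA : A ∈ Sd3 d) : pim d A = A := by
  obtain ⟨h1, h2, h3⟩ := hA
  have hs : ssym A = A := by
    ext i j
    simp only [ssym, Matrix.of_apply]
    rcases eq_or_ne i j with h | h
    · subst h; rw [if_pos rfl, h2 i]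
    · rw [if_neg h]
      have := congrFun (congrFun h1 i) j
      rw [Matrix.transpose_apply] at this
      rw [this]; ring
  have hr : ∀ i, rr A i = 0 := by intro i; rw [rr, hs]; exact h3 i
  have ht : tt A = 0 := by simp [tt, hr]
  ext i j
  simp only [pim, Matrix.of_apply, hs, hr, ht]
  rcases eq_or_ne i j with h | h
  · subst h; rw [if_pos rfl, h2 i]
  · rw [if_neg h]; ring

lemma ssym_transpose (A : M d) : ssym Aᵀ = ssym A := by
  ext i j
  simp only [ssym, Matrix.of_apply, Matrix.transpose_apply]
  split_ifs <;> ring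

lemma pim_transpose (A : M d) : pim d Aᵀ = pim d A := by
  ext i j
  simp only [pim, Matrix.of_apply, rr, tt, ssym_transpose]

lemma ssym_add (A B : M d) : ssym (A + B) = ssym A + ssym B := by
  ext i j
  simp only [ssym, Matrix.of_apply, Matrix.add_apply]
  split_ifs <;> ring

lemma ssym_smul (c : ℝ) (A : M d) : ssym (c • A) = c • ssym A := by
  ext i j
  simp only [ssym, Matrix.of_apply, Matrix.smul_apply, smul_eq_mul]
  split_ifs <;> ring

lemma rr_add (A B : M d) (i : Fin d) : rr (A + B) i = rr A i + rr B i := by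
  simp [rr, ssym_add, Finset.sum_add_distrib]

lemma rr_smul (c : ℝ) (A : M d) (i : Fin d) : rr (c • A) i = c * rr A i := by
  simp [rr, ssym_smul, Finset.mul_sum]

lemma tt_add (A B : M d) : tt (A + B) = tt A + tt B := by
  simp [tt, rr_add, Finset.sum_add_distrib]

lemma tt_smul (c : ℝ) (A : M d) : tt (c • A) = c * tt A := by
  simp [tt, rr_smul, Finset.mul_sum]

lemma pim_add (A B : M d) : pim d (A + B) = pim d A + pim d B := by
  ext i j
  simp only [pim, Matrix.of_apply, Matrix.add_apply, ssym_add, rr_add, tt_add]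
  split_ifs with h
  · ring
  · ring

lemma pim_smul (c : ℝ) (A : M d) : pim d (c • A) = c • pim d A := by
  ext i j
  simp only [pim, Matrix.of_apply, Matrix.smul_apply, ssym_smul, rr_smul, tt_smul,
    smul_eq_mul]
  split_ifs with h
  · ring
  · ring

lemma ssym_act (σ : Equiv.Perm (Fin d)) (A : M d) (i j : Fin d) :
    ssym (permMat σ * A * (permMat σ)ᵀ) i j = ssym A (σ.symm i) (σ.symm j) := by
  simp only [ssym, Matrix.of_apply, act_apply]
  congr 1
  simp [eq_iff_iff, EmbeddingLike.apply_eq_iff_eq]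

lemma rr_act (σ : Equiv.Perm (Fin d)) (A : M d) (i : Fin d) :
    rr (permMat σ * A * (permMat σ)ᵀ) i = rr A (σ.symm i) := by
  simp only [rr, ssym_act]
  exact Equiv.sum_comp σ.symm (fun j => ssym A (σ.symm i) j)

lemma tt_act (σ : Equiv.Perm (Fin d)) (A : M d) :
    tt (permMat σ * A * (permMat σ)ᵀ) = tt A := by
  simp only [tt, rr_act]
  exact Equiv.sum_comp σ.symm (fun i => rr A i)

lemma pim_act (σ : Equiv.Perm (Fin d)) (A : M d) :
    pim d (permMat σ * A * (permMat σ)ᵀ) = permMat σ * pim d A * (permMat σ)ᵀ := by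
  ext i j
  rw [act_apply]
  simp only [pim, Matrix.of_apply, ssym_act, rr_act, tt_act]
  congr 1
  simp [eq_iff_iff, EmbeddingLike.apply_eq_iff_eq]

noncomputable def uu (hd : 4 ≤ d) (x : Fin d) : ℝ :=
  if x = ⟨0, by omega⟩ ∨ x = ⟨1, by omega⟩ then 1 else 0

lemma uu_z0 (hd : 4 ≤ d) : uu hd ⟨0, by omega⟩ = 1 := if_pos (Or.inl rfl)
lemma uu_z1 (hd : 4 ≤ d) : uu hd ⟨1, by omega⟩ = 1 := if_pos (Or.inr rfl)
lemma uu_other (hd : 4 ≤ d) {x : Fin d} (hx0 : x ≠ ⟨0, by omega⟩) (hx1 : x ≠ ⟨1, by omega⟩) :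
    uu hd x = 0 := if_neg (by tauto)

noncomputable def piL (hd : 4 ≤ d) : M d →ₗ[ℝ] ↥(Sd3 d) where
  toFun := fun A => ⟨pim d A, pim_mem hd A⟩
  map_add' := fun A B => Subtype.ext (pim_add A B)
  map_smul' := fun c A => Subtype.ext (pim_smul c A)

noncomputable def FF (hd : 4 ≤ d) (T : ↥(Sd3 d) →ₗ[ℝ] ↥(Sd3 d)) : M d →ₗ[ℝ] M d :=
  (Sd3 d).subtype ∘ₗ T ∘ₗ piL hd

lemma FF_mem (hd : 4 ≤ d) (T : ↥(Sd3 d) →ₗ[ℝ] ↥(Sd3 d)) (A : M d) :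
    FF hd T A ∈ Sd3 d := (T (piL hd A)).2

lemma FF_symm (hd : 4 ≤ d) (T : ↥(Sd3 d) →ₗ[ℝ] ↥(Sd3 d)) (A : M d) (k l : Fin d) :
    FF hd T A k l = FF hd T A l k := by
  have h := (FF_mem hd T A).1
  have := congrFun (congrFun h l) k
  rw [Matrix.transpose_apply] at this
  exact this

variable (hd : 4 ≤ d) (T : ↥(Sd3 d) →ₗ[ℝ] ↥(Sd3 d))

lemma FF_equiv
    (hT : ∀ (σ : Equiv.Perm (Fin d)) (W V : ↥(Sd3 d)),
      (V : M d) = permMat σ * (W : M d) * (permMat σ)ᵀ →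
      (T V : M d) = permMat σ * (T W : M d) * (permMat σ)ᵀ)
    (σ : Equiv.Perm (Fin d)) (A : M d) :
    FF hd T (permMat σ * A * (permMat σ)ᵀ) = permMat σ * FF hd T A * (permMat σ)ᵀ := by
  have hpi : piL hd (permMat σ * A * (permMat σ)ᵀ)
      = ⟨permMat σ * pim d A * (permMat σ)ᵀ, act_mem σ (pim_mem hd A)⟩ :=
    Subtype.ext (pim_act σ A)
  show ((T (piL hd (permMat σ * A * (permMat σ)ᵀ)) : ↥(Sd3 d)) : M d)
      = permMat σ * ((T (piL hd A) : ↥(Sd3 d)) : M d) * (permMat σ)ᵀ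
  rw [hpi]
  exact hT σ (piL hd A) _ rfl

noncomputable def cc (k l : Fin d) : ℝ :=
  FF hd T (Matrix.single k l 1) ⟨0, by omega⟩ ⟨1, by omega⟩

lemma FF_entry_sum (A : M d) :
    FF hd T A ⟨0, by omega⟩ ⟨1, by omega⟩ = ∑ k, ∑ l, A k l * cc hd T k l := by
  conv_lhs => rw [matrix_eq_sum_single A]
  simp only [map_sum, Matrix.sum_apply]
  refine Finset.sum_congr rfl fun k _ => Finset.sum_congr rfl fun l _ => ?_
  have h : Matrix.single k l (A k l) = (A k l) • Matrix.single k l (1:ℝ) := by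
    rw [smul_single, smul_eq_mul, mul_one]
  rw [h, LinearMap.map_smul, Matrix.smul_apply, smul_eq_mul]
  rfl

lemma act_std (σ : Equiv.Perm (Fin d)) (k l : Fin d) :
    permMat σ * Matrix.single k l (1:ℝ) * (permMat σ)ᵀ = Matrix.single (σ k) (σ l) 1 := by
  ext i j
  rw [act_apply]
  simp only [Matrix.single, Matrix.of_apply]
  congr 1
  rw [eq_iff_iff]
  constructor
  · rintro ⟨h1, h2⟩
    exact ⟨by rw [h1, Equiv.apply_symm_apply], by rw [h2, Equiv.apply_symm_apply]⟩
  · rintro ⟨h1, h2⟩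
    exact ⟨by rw [← h1, Equiv.symm_apply_apply], by rw [← h2, Equiv.symm_apply_apply]⟩

lemma cc_inv'
    (hT : ∀ (σ : Equiv.Perm (Fin d)) (W V : ↥(Sd3 d)),
      (V : M d) = permMat σ * (W : M d) * (permMat σ)ᵀ →
      (T V : M d) = permMat σ * (T W : M d) * (permMat σ)ᵀ)
    (σ : Equiv.Perm (Fin d)) (k l : Fin d) :
    cc hd T (σ k) (σ l)
      = FF hd T (Matrix.single k l 1) (σ.symm ⟨0, by omega⟩) (σ.symm ⟨1, by omega⟩) := by
  show FF hd T (Matrix.single (σ k) (σ l) 1) _ _ = _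
  rw [← act_std σ k l, FF_equiv hd T hT σ, act_apply]

lemma cc_transpose (k l : Fin d) : cc hd T k l = cc hd T l k := by
  show FF hd T (Matrix.single k l 1) _ _ = FF hd T (Matrix.single l k 1) _ _
  have hstd : (Matrix.single k l (1:ℝ))ᵀ = Matrix.single l k 1 := by
    ext i j
    simp only [Matrix.transpose_apply, Matrix.single, Matrix.of_apply]
    congr 1
    rw [eq_iff_iff, and_comm]
  have h : pim d (Matrix.single l k (1:ℝ)) = pim d (Matrix.single k l 1) := by
    rw [← hstd, pim_transpose]
  show ((T (piL hd _) : ↥(Sd3 d)) : M d) _ _ = ((T (piL hd _) : ↥(Sd3 d)) : M d) _ _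
  have : piL hd (Matrix.single l k (1:ℝ)) = piL hd (Matrix.single k l 1) :=
    Subtype.ext h
  rw [this]

lemma swap_mem3 (a x b : Fin d) :
    Equiv.swap a x b = a ∨ Equiv.swap a x b = x ∨ Equiv.swap a x b = b := by
  rcases eq_or_ne b a with h | h
  · right; left; rw [h, Equiv.swap_apply_left]
  · rcases eq_or_ne b x with h' | h'
    · left; rw [h', Equiv.swap_apply_right]
    · right; right; exact Equiv.swap_apply_of_ne_of_ne h h'

lemma exists_perm_map2 {a b x y : Fin d} (hab : a ≠ b) (hxy : x ≠ y) :
    ∃ σ : Equiv.Perm (Fin d), σ a = x ∧ σ b = y := by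
  refine ⟨Equiv.swap (Equiv.swap a x b) y * Equiv.swap a x, ?_, ?_⟩
  · simp only [Equiv.Perm.mul_apply, Equiv.swap_apply_left]
    apply Equiv.swap_apply_of_ne_of_ne
    · intro h
      apply hab
      have h2 := congrArg (Equiv.swap a x) h
      rw [Equiv.swap_apply_right, Equiv.swap_apply_self] at h2
      exact h2
    · exact hxy
  · simp only [Equiv.Perm.mul_apply, Equiv.swap_apply_left]

lemma exists_perm_fix2 {i0 i1 a b x y : Fin d}
    (ha0 : a ≠ i0) (ha1 : a ≠ i1) (hb0 : b ≠ i0) (hb1 : b ≠ i1)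
    (hx0 : x ≠ i0) (hx1 : x ≠ i1) (hy0 : y ≠ i0) (hy1 : y ≠ i1)
    (hab : a ≠ b) (hxy : x ≠ y) :
    ∃ σ : Equiv.Perm (Fin d), σ i0 = i0 ∧ σ i1 = i1 ∧ σ a = x ∧ σ b = y := by
  have hτb0 : Equiv.swap a x b ≠ i0 := by
    rcases swap_mem3 a x b with h | h | h <;> rw [h] <;> assumption
  have hτb1 : Equiv.swap a x b ≠ i1 := by
    rcases swap_mem3 a x b with h | h | h <;> rw [h] <;> assumption
  refine ⟨Equiv.swap (Equiv.swap a x b) y * Equiv.swap a x, ?_, ?_, ?_, ?_⟩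
  · simp only [Equiv.Perm.mul_apply]
    rw [Equiv.swap_apply_of_ne_of_ne (Ne.symm ha0) (Ne.symm hx0),
      Equiv.swap_apply_of_ne_of_ne (Ne.symm hτb0) (Ne.symm hy0)]
  · simp only [Equiv.Perm.mul_apply]
    rw [Equiv.swap_apply_of_ne_of_ne (Ne.symm ha1) (Ne.symm hx1),
      Equiv.swap_apply_of_ne_of_ne (Ne.symm hτb1) (Ne.symm hy1)]
  · simp only [Equiv.Perm.mul_apply, Equiv.swap_apply_left]
    apply Equiv.swap_apply_of_ne_of_ne
    · intro h
      apply hab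
      have h2 := congrArg (Equiv.swap a x) h
      rw [Equiv.swap_apply_right, Equiv.swap_apply_self] at h2
      exact h2
    · exact hxy
  · simp only [Equiv.Perm.mul_apply, Equiv.swap_apply_left]

variable (hT : ∀ (σ : Equiv.Perm (Fin d)) (W V : ↥(Sd3 d)),
      (V : M d) = permMat σ * (W : M d) * (permMat σ)ᵀ →
      (T V : M d) = permMat σ * (T W : M d) * (permMat σ)ᵀ)

include hT

lemma cc_fix (σ : Equiv.Perm (Fin d))
    (h0 : σ ⟨0, by omega⟩ = ⟨0, by omega⟩) (h1 : σ ⟨1, by omega⟩ = ⟨1, by omega⟩)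
    (k l : Fin d) : cc hd T (σ k) (σ l) = cc hd T k l := by
  rw [cc_inv' hd T hT σ k l]
  have e0 : σ.symm ⟨0, by omega⟩ = (⟨0, by omega⟩ : Fin d) :=
    σ.symm_apply_eq.mpr h0.symm
  have e1 : σ.symm ⟨1, by omega⟩ = (⟨1, by omega⟩ : Fin d) :=
    σ.symm_apply_eq.mpr h1.symm
  rw [e0, e1]
  rfl

lemma cc_swap01 (k l : Fin d) :
    cc hd T (Equiv.swap ⟨0, by omega⟩ ⟨1, by omega⟩ k)
      (Equiv.swap ⟨0, by omega⟩ ⟨1, by omega⟩ l) = cc hd T k l := by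
  rw [cc_inv' hd T hT]
  rw [Equiv.symm_swap, Equiv.swap_apply_left, Equiv.swap_apply_right]
  exact (FF_symm hd T _ _ _).symm

lemma cc_val1 (k : Fin d) (hk0 : k ≠ ⟨0, by omega⟩) (hk1 : k ≠ ⟨1, by omega⟩) :
    cc hd T ⟨0, by omega⟩ k = cc hd T ⟨0, by omega⟩ ⟨2, by omega⟩ := by
  rcases eq_or_ne k ⟨2, by omega⟩ with rfl | hk2
  · rfl
  have h02 : (⟨0, by omega⟩ : Fin d) ≠ ⟨2, by omega⟩ := Fin.ne_of_val_ne (by norm_num)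
  have h12 : (⟨1, by omega⟩ : Fin d) ≠ ⟨2, by omega⟩ := Fin.ne_of_val_ne (by norm_num)
  have hfix := cc_fix hd T hT (Equiv.swap ⟨2, by omega⟩ k)
    (Equiv.swap_apply_of_ne_of_ne h02 (Ne.symm hk0))
    (Equiv.swap_apply_of_ne_of_ne h12 (Ne.symm hk1))
    ⟨0, by omega⟩ ⟨2, by omega⟩
  rw [Equiv.swap_apply_of_ne_of_ne h02 (Ne.symm hk0), Equiv.swap_apply_left] at hfix
  exact hfix

lemma cc_val1' (k : Fin d) (hk0 : k ≠ ⟨0, by omega⟩) (hk1 : k ≠ ⟨1, by omega⟩) :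
    cc hd T ⟨1, by omega⟩ k = cc hd T ⟨0, by omega⟩ ⟨2, by omega⟩ := by
  have hswap := cc_swap01 hd T hT ⟨1, by omega⟩ k
  rw [Equiv.swap_apply_right, Equiv.swap_apply_of_ne_of_ne hk0 hk1] at hswap
  rw [← hswap]
  exact cc_val1 hd T hT k hk0 hk1

lemma cc_val0 (k l : Fin d) (hk0 : k ≠ ⟨0, by omega⟩) (hk1 : k ≠ ⟨1, by omega⟩)
    (hl0 : l ≠ ⟨0, by omega⟩) (hl1 : l ≠ ⟨1, by omega⟩) (hkl : k ≠ l) :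
    cc hd T k l = cc hd T ⟨2, by omega⟩ ⟨3, by omega⟩ := by
  have h20 : (⟨2, by omega⟩ : Fin d) ≠ ⟨0, by omega⟩ := Fin.ne_of_val_ne (by norm_num)
  have h21 : (⟨2, by omega⟩ : Fin d) ≠ ⟨1, by omega⟩ := Fin.ne_of_val_ne (by norm_num)
  have h30 : (⟨3, by omega⟩ : Fin d) ≠ ⟨0, by omega⟩ := Fin.ne_of_val_ne (by norm_num)
  have h31 : (⟨3, by omega⟩ : Fin d) ≠ ⟨1, by omega⟩ := Fin.ne_of_val_ne (by norm_num)
  have h23 : (⟨2, by omega⟩ : Fin d) ≠ ⟨3, by omega⟩ := Fin.ne_of_val_ne (by norm_num)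
  obtain ⟨σ, hσ0, hσ1, hσ2, hσ3⟩ :=
    exists_perm_fix2 (i0 := (⟨0, by omega⟩ : Fin d)) (i1 := (⟨1, by omega⟩ : Fin d))
      h20 h21 h30 h31 hk0 hk1 hl0 hl1 h23 hkl
  have hfix := cc_fix hd T hT σ hσ0 hσ1 ⟨2, by omega⟩ ⟨3, by omega⟩
  rw [hσ2, hσ3] at hfix
  exact hfix

lemma key (A : M d) (hA : A ∈ Sd3 d) :
    FF hd T A ⟨0, by omega⟩ ⟨1, by omega⟩
      = (2 * (cc hd T ⟨0, by omega⟩ ⟨1, by omega⟩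
          - 2 * cc hd T ⟨0, by omega⟩ ⟨2, by omega⟩
          + cc hd T ⟨2, by omega⟩ ⟨3, by omega⟩)) * A ⟨0, by omega⟩ ⟨1, by omega⟩ := by
  obtain ⟨hsymm, hdiag, hrow⟩ := hA
  have hsym' : ∀ k l : Fin d, A l k = A k l := fun k l => congrFun (congrFun hsymm k) l
  have hcol : ∀ l, ∑ k, A k l = 0 := by
    intro l
    rw [Finset.sum_congr rfl fun k _ => hsym' l k]
    exact hrow l
  have h01 : (⟨0, by omega⟩ : Fin d) ≠ ⟨1, by omega⟩ := Fin.ne_of_val_ne (by norm_num)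
  -- abbreviations
  set c2 := cc hd T ⟨0, by omega⟩ ⟨1, by omega⟩ with hc2
  set c1 := cc hd T ⟨0, by omega⟩ ⟨2, by omega⟩ with hc1
  set c0 := cc hd T ⟨2, by omega⟩ ⟨3, by omega⟩ with hc0
  have hstep : ∀ k l : Fin d, A k l * cc hd T k l
      = A k l * (c0 + (c1 - c0) * (uu hd k + uu hd l)
          + (c2 - 2*c1 + c0) * (uu hd k * uu hd l)) := by
    intro k l
    rcases eq_or_ne k l with rfl | hkl
    · rw [hdiag k, zero_mul, zero_mul]
    congr 1
    by_cases hk0 : k = ⟨0, by omega⟩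
    · subst hk0
      by_cases hl1 : l = ⟨1, by omega⟩
      · subst hl1
        rw [uu_z0 hd, uu_z1 hd, ← hc2]
        ring
      · have hl0 : l ≠ ⟨0, by omega⟩ := Ne.symm hkl
        rw [cc_val1 hd T hT l hl0 hl1, ← hc1, uu_z0 hd, uu_other hd hl0 hl1]
        ring
    · by_cases hk1 : k = ⟨1, by omega⟩
      · subst hk1
        by_cases hl0 : l = ⟨0, by omega⟩
        · subst hl0
          rw [cc_transpose, ← hc2, uu_z0 hd, uu_z1 hd]
          ring
        · have hl1 : l ≠ ⟨1, by omega⟩ := Ne.symm hkl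
          rw [cc_val1' hd T hT l hl0 hl1, ← hc1, uu_z1 hd, uu_other hd hl0 hl1]
          ring
      · by_cases hl0 : l = ⟨0, by omega⟩
        · subst hl0
          rw [cc_transpose, cc_val1 hd T hT k hk0 hk1, ← hc1, uu_z0 hd, uu_other hd hk0 hk1]
          ring
        · by_cases hl1 : l = ⟨1, by omega⟩
          · subst hl1
            rw [cc_transpose, cc_val1' hd T hT k hk0 hk1, ← hc1, uu_z1 hd,
              uu_other hd hk0 hk1]
            ring
          · rw [cc_val0 hd T hT k l hk0 hk1 hl0 hl1 hkl, ← hc0,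
              uu_other hd hk0 hk1, uu_other hd hl0 hl1]
            ring
  rw [FF_entry_sum hd T A]
  rw [Finset.sum_congr rfl fun k _ => Finset.sum_congr rfl fun l _ => hstep k l]
  have hexp : ∀ k l : Fin d, A k l * (c0 + (c1 - c0) * (uu hd k + uu hd l)
        + (c2 - 2*c1 + c0) * (uu hd k * uu hd l))
      = c0 * A k l + (c1-c0) * (A k l * uu hd k) + (c1-c0) * (A k l * uu hd l)
        + (c2-2*c1+c0) * (uu hd k * (A k l * uu hd l)) := fun k l => by ring
  simp_rw [hexp, Finset.sum_add_distrib]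
  have e1 : ∑ k : Fin d, ∑ l, c0 * A k l = 0 :=
    Finset.sum_eq_zero fun k _ => by rw [← Finset.mul_sum, hrow k, mul_zero]
  have e2 : ∑ k : Fin d, ∑ l, (c1-c0) * (A k l * uu hd k) = 0 := by
    refine Finset.sum_eq_zero fun k _ => ?_
    rw [← Finset.mul_sum, ← Finset.sum_mul, hrow k, zero_mul, mul_zero]
  have e3 : ∑ k : Fin d, ∑ l, (c1-c0) * (A k l * uu hd l) = 0 := by
    rw [Finset.sum_comm]
    refine Finset.sum_eq_zero fun l _ => ?_
    rw [← Finset.mul_sum, ← Finset.sum_mul, hcol l, zero_mul, mul_zero]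
  have hite : ∀ (k l : Fin d), A k l * uu hd l
      = (if l = ⟨0, by omega⟩ then A k ⟨0, by omega⟩ else 0)
        + (if l = ⟨1, by omega⟩ then A k ⟨1, by omega⟩ else 0) := by
    intro k l
    by_cases h0 : l = ⟨0, by omega⟩
    · subst h0
      rw [uu_z0 hd, if_pos rfl, if_neg h01, mul_one, add_zero]
    · by_cases h1 : l = ⟨1, by omega⟩
      · subst h1
        rw [uu_z1 hd, if_neg h0, if_pos rfl, mul_one, zero_add]
      · rw [uu_other hd h0 h1, mul_zero, if_neg h0, if_neg h1, add_zero]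
  have hUinner : ∀ k : Fin d, ∑ l, uu hd k * (A k l * uu hd l)
      = uu hd k * (A k ⟨0, by omega⟩ + A k ⟨1, by omega⟩) := by
    intro k
    rw [← Finset.mul_sum]
    congr 1
    simp_rw [hite k]
    rw [Finset.sum_add_distrib, Finset.sum_ite_eq', Finset.sum_ite_eq']
    simp
  have hite2 : ∀ k : Fin d, uu hd k * (A k ⟨0, by omega⟩ + A k ⟨1, by omega⟩)
      = (if k = ⟨0, by omega⟩ then A ⟨0, by omega⟩ ⟨0, by omega⟩
            + A ⟨0, by omega⟩ ⟨1, by omega⟩ else 0)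
        + (if k = ⟨1, by omega⟩ then A ⟨1, by omega⟩ ⟨0, by omega⟩
            + A ⟨1, by omega⟩ ⟨1, by omega⟩ else 0) := by
    intro k
    by_cases h0 : k = ⟨0, by omega⟩
    · subst h0
      rw [uu_z0 hd, if_pos rfl, if_neg h01, one_mul, add_zero]
    · by_cases h1 : k = ⟨1, by omega⟩
      · subst h1
        rw [uu_z1 hd, if_neg h0, if_pos rfl, one_mul, zero_add]
      · rw [uu_other hd h0 h1, zero_mul, if_neg h0, if_neg h1, add_zero]
  have e4 : ∑ k : Fin d, ∑ l, (c2-2*c1+c0) * (uu hd k * (A k l * uu hd l))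
      = (c2-2*c1+c0) * (2 * A ⟨0, by omega⟩ ⟨1, by omega⟩) := by
    have h5 : ∀ k : Fin d, ∑ l, (c2-2*c1+c0) * (uu hd k * (A k l * uu hd l))
        = (c2-2*c1+c0) * (uu hd k * (A k ⟨0, by omega⟩ + A k ⟨1, by omega⟩)) := by
      intro k
      rw [← Finset.mul_sum, hUinner k]
    simp_rw [h5]
    rw [← Finset.mul_sum]
    congr 1
    simp_rw [hite2]
    rw [Finset.sum_add_distrib, Finset.sum_ite_eq', Finset.sum_ite_eq']
    simp only [Finset.mem_univ, if_pos]
    rw [hdiag, hdiag, hsym' ⟨0, by omega⟩ ⟨1, by omega⟩]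
    ring
  rw [e1, e2, e3, e4]
  ring

end Sd3Aux

/-- for `d ≥ 4`, every `S_d`-equivariant linear endomorphism of
`𝕊_{d,3}` (for the diagonal action `W ↦ P_σ W P_σᵀ`) is a scalar multiple of the
identity. -/
theorem equivariant_endomorphism_Sd3_is_scalar (d : ℕ) (hd : 4 ≤ d)
    (T : ↥(Sd3 d) →ₗ[ℝ] ↥(Sd3 d))
    (hT : ∀ (σ : Equiv.Perm (Fin d)) (W V : ↥(Sd3 d)),
      (V : Matrix (Fin d) (Fin d) ℝ) = permMat σ * (W : Matrix (Fin d) (Fin d) ℝ) * (permMat σ)ᵀ →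
      (T V : Matrix (Fin d) (Fin d) ℝ) = permMat σ * (T W : Matrix (Fin d) (Fin d) ℝ) * (permMat σ)ᵀ) :
    ∃ c : ℝ, ∀ W : ↥(Sd3 d), T W = c • W := by
  classical
  refine ⟨2 * (Sd3Aux.cc hd T ⟨0, by omega⟩ ⟨1, by omega⟩
      - 2 * Sd3Aux.cc hd T ⟨0, by omega⟩ ⟨2, by omega⟩
      + Sd3Aux.cc hd T ⟨2, by omega⟩ ⟨3, by omega⟩), fun W => ?_⟩
  have hFW : Sd3Aux.FF hd T (W : Matrix (Fin d) (Fin d) ℝ)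
      = ((T W : ↥(Sd3 d)) : Matrix (Fin d) (Fin d) ℝ) := by
    show ((T (Sd3Aux.piL hd (W : Matrix (Fin d) (Fin d) ℝ)) : ↥(Sd3 d))
        : Matrix (Fin d) (Fin d) ℝ) = _
    have hp : Sd3Aux.piL hd (W : Matrix (Fin d) (Fin d) ℝ) = W :=
      Subtype.ext (Sd3Aux.pim_eq_self W.2)
    rw [hp]
  have h01 : (⟨0, by omega⟩ : Fin d) ≠ ⟨1, by omega⟩ := Fin.ne_of_val_ne (by norm_num)
  apply Subtype.ext
  ext i j
  rw [Submodule.coe_smul, Matrix.smul_apply, smul_eq_mul]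
  rcases eq_or_ne i j with rfl | hij
  · rw [(T W).2.2.1 i, W.2.2.1 i, mul_zero]
  · obtain ⟨σ, hσi, hσj⟩ := Sd3Aux.exists_perm_map2 hij h01
    have hmem := Sd3Aux.act_mem σ W.2
    have hkey := Sd3Aux.key hd T hT
      (permMat σ * (W : Matrix (Fin d) (Fin d) ℝ) * (permMat σ)ᵀ) hmem
    rw [Sd3Aux.FF_equiv hd T hT σ (W : Matrix (Fin d) (Fin d) ℝ)] at hkey
    simp only [Sd3Aux.act_apply] at hkey
    have hsi : σ.symm ⟨0, by omega⟩ = i := σ.symm_apply_eq.mpr hσi.symm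
    have hsj : σ.symm ⟨1, by omega⟩ = j := σ.symm_apply_eq.mpr hσj.symm
    rw [hsi, hsj, hFW] at hkey
    exact hkey
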